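/- Cartan decomposition: let R be a discrete valuation ring with uniformiser ϖ and fraction field K. The group GL_n(K) is the disjoint union, over antitone functions f : Fin n → ℤ, of the double cosets GL_n(R) · diag(ϖ^f) · GL_n(R); that is, every g ∈ GL_n(K) lies in exactly one such double coset. -/

import Mathlib

open Matrix

/-- The diagonal matrix over `K` with `i`-th diagonal entry `ϖ ^ f i`, for `f : Fin n → ℤ`. -/
noncomputable def cartanDiag {R : Type*} [CommRing R] {K : Type*} [Field K] [Algebra R K]
    (ϖ : R) {n : ℕ} (f : Fin n → ℤ) : Matrix (Fin n) (Fin n) K :=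
  Matrix.diagonal fun i => (algebraMap R K ϖ) ^ (f i)

namespace CartanAux

variable {R : Type*} [CommRing R] {n k : ℕ}



/-- All `k`-minors of `A * M` are divisible by anything dividing all `k`-minors of `M`. -/
lemma dvd_det_submatrix_mul_left (x : R) (A M : Matrix (Fin n) (Fin n) R)
    (h : ∀ r c : Fin k → Fin n, x ∣ (M.submatrix r c).det)
    (r c : Fin k → Fin n) : x ∣ ((A * M).submatrix r c).det := by
  classical
  have hrow : ((A * M).submatrix r c) =
      Matrix.of (fun i => ∑ l : Fin n, A (r i) l • fun j => M l (c j)) := by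
    ext i j
    simp [Matrix.mul_apply, Finset.sum_apply]
  rw [hrow]
  have := (Matrix.detRowAlternating (R := R) (n := Fin k)).toMultilinearMap.map_sum
    (fun (i : Fin k) (l : Fin n) => A (r i) l • fun j => M l (c j))
  rw [show ((Matrix.of (fun i => ∑ l : Fin n, A (r i) l • fun j => M l (c j))).det)
      = (Matrix.detRowAlternating (R := R) (n := Fin k)).toMultilinearMap
        (fun i => ∑ l : Fin n, A (r i) l • fun j => M l (c j)) from rfl]
  rw [this]
  refine Finset.dvd_sum fun φ _ => ?_
  rw [MultilinearMap.map_smul_univ]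
  rw [smul_eq_mul]
  exact Dvd.dvd.mul_left (h φ c) _

lemma dvd_det_submatrix_mul_right (x : R) (M B : Matrix (Fin n) (Fin n) R)
    (h : ∀ r c : Fin k → Fin n, x ∣ (M.submatrix r c).det)
    (r c : Fin k → Fin n) : x ∣ ((M * B).submatrix r c).det := by
  have h' : ∀ r c : Fin k → Fin n, x ∣ (Mᵀ.submatrix r c).det := by
    intro r c
    rw [show (Mᵀ.submatrix r c) = (M.submatrix c r)ᵀ from rfl, Matrix.det_transpose]
    exact h c r
  have := dvd_det_submatrix_mul_left x Bᵀ Mᵀ h' c r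
  rwa [← Matrix.transpose_mul, show ((M * B)ᵀ.submatrix c r) = ((M * B).submatrix r c)ᵀ from rfl,
    Matrix.det_transpose] at this




lemma strictMono_le_apply {f : Fin k → Fin n} (hf : StrictMono f) (i : Fin k) :
    (i : ℕ) ≤ (f i : ℕ) := by
  induction k with
  | zero => exact i.elim0
  | succ m _ =>
    induction i using Fin.induction with
    | zero => exact Nat.zero_le _
    | succ j hj =>
      have h1 : f j.castSucc < f j.succ := hf (by simp [Fin.castSucc_lt_succ_iff])
      have h2 : (j.castSucc : ℕ) ≤ (f j.castSucc : ℕ) := hj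
      have h3 : (f j.castSucc : ℕ) < (f j.succ : ℕ) := h1
      simp only [Fin.coe_castSucc] at h2
      simp [Fin.val_succ]
      omega

lemma sum_le_sum_comp_injective (e : Fin n → ℕ) (he : Monotone e) (hk : k ≤ n)
    (c : Fin k → Fin n) (hc : Function.Injective c) :
    ∑ i : Fin k, e (Fin.castLE hk i) ≤ ∑ i, e (c i) := by
  classical
  set s : Finset (Fin n) := Finset.univ.image c with hs
  have hcard : s.card = k := by
    rw [hs, Finset.card_image_of_injective _ hc, Finset.card_univ, Fintype.card_fin]
  have hsum : ∑ i, e (c i) = ∑ x ∈ s, e x := by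
    rw [hs, Finset.sum_image (fun a _ b _ hab => hc hab)]
  set σ := s.orderEmbOfFin hcard with hσ
  have hmap : s = Finset.univ.map ⟨σ, σ.injective⟩ := by
    ext x
    simp only [Finset.mem_map, Finset.mem_univ, true_and, Function.Embedding.coeFn_mk]
    constructor
    · intro hx
      have : x ∈ Set.range σ := by rw [hσ, Finset.range_orderEmbOfFin]; exact hx
      obtain ⟨i, hi⟩ := this; exact ⟨i, hi⟩
    · rintro ⟨i, rfl⟩
      exact Finset.orderEmbOfFin_mem s hcard i
  rw [hsum, hmap, Finset.sum_map]
  refine Finset.sum_le_sum fun i _ => ?_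
  refine he ?_
  have := strictMono_le_apply σ.strictMono i
  exact Fin.le_def.mpr (by simpa using this)




lemma diagonal_submatrix_inj (d : Fin n → R) (c : Fin k → Fin n) (hc : Function.Injective c) :
    (diagonal d).submatrix c c = diagonal (fun i => d (c i)) := by
  classical
  ext i j
  by_cases h : i = j
  · subst h; simp
  · rw [submatrix_apply, diagonal_apply_ne _ (fun hcc => h (hc hcc)), diagonal_apply_ne _ h]

lemma pow_dvd_det_submatrix_diagonal (ϖ : R) (e : Fin n → ℕ) (he : Monotone e) (hk : k ≤ n)
    (r c : Fin k → Fin n) :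
    ϖ ^ (∑ i : Fin k, e (Fin.castLE hk i)) ∣
      (((diagonal fun i => ϖ ^ e i).submatrix r c)).det := by
  classical
  by_cases hc : Function.Injective c
  · rw [Matrix.det_apply']
    refine Finset.dvd_sum fun σ _ => ?_
    refine Dvd.dvd.mul_left ?_ _
    by_cases hall : ∀ i, r (σ i) = c i
    · have : ∏ i, ((diagonal fun i => ϖ ^ e i).submatrix r c) (σ i) i
          = ϖ ^ (∑ i, e (c i)) := by
        rw [← Finset.prod_pow_eq_pow_sum]
        refine Finset.prod_congr rfl fun i _ => ?_
        rw [submatrix_apply, hall i, diagonal_apply_eq]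
      rw [this]
      exact pow_dvd_pow _ (sum_le_sum_comp_injective e he hk c hc)
    · push_neg at hall
      obtain ⟨i, hi⟩ := hall
      have h1 : ((diagonal fun i => ϖ ^ e i).submatrix r c) (σ i) i = 0 := by
        rw [submatrix_apply, diagonal_apply_ne _ hi]
      have h0 : ∏ i : Fin k, ((diagonal fun i => ϖ ^ e i).submatrix r c) (σ i) i = 0 :=
        Finset.prod_eq_zero (Finset.mem_univ i) h1
      rw [h0]
      exact dvd_zero _
  · rw [Function.not_injective_iff] at hc
    obtain ⟨i, j, hij, hne⟩ := hc
    rw [Matrix.det_zero_of_column_eq hne (fun l => by rw [submatrix_apply, submatrix_apply, hij])]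
    exact dvd_zero _





/-- Embed an `n × n` matrix as the lower-right block with `a` in the top-left corner. -/
def embed (a : R) (A : Matrix (Fin n) (Fin n) R) : Matrix (Fin (n + 1)) (Fin (n + 1)) R :=
  Matrix.of (Fin.cons (Fin.cons a 0) fun i => Fin.cons 0 (A i))

@[simp] lemma embed_zero_zero (a : R) (A : Matrix (Fin n) (Fin n) R) : embed a A 0 0 = a := rfl

@[simp] lemma embed_zero_succ (a : R) (A : Matrix (Fin n) (Fin n) R) (j : Fin n) :
    embed a A 0 j.succ = 0 := by
  simp [embed]

@[simp] lemma embed_succ_zero (a : R) (A : Matrix (Fin n) (Fin n) R) (i : Fin n) :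
    embed a A i.succ 0 = 0 := by
  simp [embed]

@[simp] lemma embed_succ_succ (a : R) (A : Matrix (Fin n) (Fin n) R) (i j : Fin n) :
    embed a A i.succ j.succ = A i j := by
  simp [embed]

lemma embed_mul (a b : R) (A B : Matrix (Fin n) (Fin n) R) :
    embed a A * embed b B = embed (a * b) (A * B) := by
  ext i j
  rw [mul_apply]
  induction i using Fin.cases with
  | zero =>
    induction j using Fin.cases with
    | zero => simp [Fin.sum_univ_succ]
    | succ j => simp [Fin.sum_univ_succ]
  | succ i =>
    induction j using Fin.cases with
    | zero => simp [Fin.sum_univ_succ]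
    | succ j => simp [Fin.sum_univ_succ, mul_apply]

lemma embed_diagonal (a : R) (d : Fin n → R) :
    embed a (diagonal d) = diagonal (Fin.cons a d) := by
  ext i j
  induction i using Fin.cases with
  | zero =>
    induction j using Fin.cases with
    | zero => simp
    | succ j => simp [diagonal_apply_ne _ (Fin.succ_ne_zero j).symm]
  | succ i =>
    induction j using Fin.cases with
    | zero => simp [diagonal_apply_ne _ (Fin.succ_ne_zero i)]
    | succ j =>
      by_cases h : i = j
      · subst h; simp
      · rw [embed_succ_succ, diagonal_apply_ne _ h,
          diagonal_apply_ne _ (fun hc => h (Fin.succ_injective _ hc))]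

lemma det_embed (a : R) (A : Matrix (Fin n) (Fin n) R) : (embed a A).det = a * A.det := by
  rw [Matrix.det_succ_row_zero, Fin.sum_univ_succ]
  have h1 : (embed a A).submatrix Fin.succ Fin.succ = A := by
    ext i j
    rw [submatrix_apply, embed_succ_succ]
  simp [h1]

lemma dvd_entries_mul_left (x : R) (A X : Matrix (Fin n) (Fin n) R)
    (h : ∀ i j, x ∣ X i j) (i j : Fin n) : x ∣ (A * X) i j := by
  rw [mul_apply]
  exact Finset.dvd_sum fun l _ => (h l j).mul_left _

lemma dvd_entries_mul_right (x : R) (X B : Matrix (Fin n) (Fin n) R)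
    (h : ∀ i j, x ∣ X i j) (i j : Fin n) : x ∣ (X * B) i j := by
  rw [mul_apply]
  exact Finset.dvd_sum fun l _ => (h i l).mul_right _

/-- The row-clearing elementary matrix. -/
def clearL (c : Fin (n + 1) → R) : Matrix (Fin (n + 1)) (Fin (n + 1)) R :=
  Matrix.of fun i l => if i = l then (1 : R) else if l = 0 then -(c i) else 0

/-- The column-clearing elementary matrix. -/
def clearR (b : Fin (n + 1) → R) : Matrix (Fin (n + 1)) (Fin (n + 1)) R :=
  Matrix.of fun l j => if l = j then (1 : R) else if l = 0 then -(b j) else 0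

lemma clearL_mul (c : Fin (n + 1) → R) (X : Matrix (Fin (n + 1)) (Fin (n + 1)) R) (i j) :
    (clearL c * X) i j = if i = 0 then X 0 j else X i j - c i * X 0 j := by
  rw [mul_apply]
  induction i using Fin.cases with
  | zero =>
    rw [if_pos rfl, Fin.sum_univ_succ]
    have hz : clearL c 0 0 = 1 := by simp [clearL]
    have hl : ∀ l : Fin n, clearL c 0 l.succ = 0 := fun l => by
      simp only [clearL, Matrix.of_apply]
      rw [if_neg (fun h => Fin.succ_ne_zero l h.symm), if_neg (Fin.succ_ne_zero l)]
    simp [hz, hl]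
  | succ i =>
    rw [if_neg (Fin.succ_ne_zero i), Fin.sum_univ_succ]
    have h0 : clearL c i.succ 0 = -(c i.succ) := by simp [clearL, Fin.succ_ne_zero i]
    have hs : ∀ l : Fin n, clearL c i.succ l.succ * X l.succ j
        = (if i = l then 1 else 0) * X l.succ j := by
      intro l
      have : clearL c i.succ l.succ = if i = l then 1 else 0 := by
        simp [clearL, Fin.succ_ne_zero, Fin.succ_inj]
      rw [this]
    rw [h0]
    simp only [hs, ite_mul, one_mul, zero_mul]
    rw [Finset.sum_ite_eq Finset.univ i fun l => X l.succ j]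
    simp only [Finset.mem_univ, if_pos]
    ring

lemma mul_clearR (b : Fin (n + 1) → R) (X : Matrix (Fin (n + 1)) (Fin (n + 1)) R) (i j) :
    (X * clearR b) i j = if j = 0 then X i 0 else X i j - X i 0 * b j := by
  rw [mul_apply]
  induction j using Fin.cases with
  | zero =>
    rw [if_pos rfl, Fin.sum_univ_succ]
    have hz : clearR b 0 0 = 1 := by simp [clearR]
    have hl : ∀ l : Fin n, clearR b l.succ 0 = 0 := fun l => by
      simp only [clearR, Matrix.of_apply]
      rw [if_neg (Fin.succ_ne_zero l), if_neg (Fin.succ_ne_zero l)]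
    simp [hz, hl]
  | succ j =>
    rw [if_neg (Fin.succ_ne_zero j), Fin.sum_univ_succ]
    have h0 : clearR b 0 j.succ = -(b j.succ) := by
      simp only [clearR, Matrix.of_apply]
      rw [if_neg (fun h => Fin.succ_ne_zero j h.symm)]
      simp
    have hs : ∀ l : Fin n, X i l.succ * clearR b l.succ j.succ
        = X i l.succ * (if l = j then 1 else 0) := by
      intro l
      have : clearR b l.succ j.succ = if l = j then 1 else 0 := by
        simp [clearR, Fin.succ_ne_zero, Fin.succ_inj]
      rw [this]
    rw [h0]
    simp only [hs, mul_ite, mul_one, mul_zero]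
    rw [Finset.sum_ite_eq' Finset.univ j fun l => X i l.succ]
    simp only [Finset.mem_univ, if_pos]
    ring

lemma det_clearL (c : Fin (n + 1) → R) : (clearL c).det = 1 := by
  have h : (clearL c).BlockTriangular OrderDual.toDual := by
    intro i j hij
    have hij' : i < j := hij
    simp only [clearL, Matrix.of_apply]
    rw [if_neg (ne_of_lt hij'), if_neg (fun h0 => by
      subst h0; exact absurd hij' (Fin.not_lt.mpr (Fin.zero_le i)))]
  rw [Matrix.det_of_lowerTriangular _ h]
  refine Finset.prod_eq_one fun i _ => by simp [clearL]

lemma det_clearR (b : Fin (n + 1) → R) : (clearR b).det = 1 := by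
  have h : (clearR b).BlockTriangular id := by
    intro i j hij
    have hij' : (j : Fin (n+1)) < i := hij
    simp only [clearR, Matrix.of_apply]
    rw [if_neg (ne_of_gt hij'), if_neg (fun h0 => by
      rw [h0] at hij'; exact absurd hij' (Fin.not_lt.mpr (Fin.zero_le j)))]
  rw [Matrix.det_of_upperTriangular h]
  refine Finset.prod_eq_one fun i _ => by simp [clearR]

lemma isUnit_det_permMatrix {k : ℕ} (σ : Equiv.Perm (Fin k)) :
    IsUnit ((σ.permMatrix R).det) := by
  rw [Matrix.det_permutation]
  rcases Int.units_eq_one_or σ.sign with h | h <;> simp [h]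

lemma exists_dvd_all [IsDomain R] [ValuationRing R] (s : Finset R) (hs : s.Nonempty) :
    ∃ m ∈ s, ∀ b ∈ s, m ∣ b := by
  classical
  induction s using Finset.induction_on with
  | empty => simp at hs
  | @insert a s' ha ih =>
    rcases s'.eq_empty_or_nonempty with rfl | hne
    · exact ⟨a, by simp⟩
    · obtain ⟨m, hm, hdvd⟩ := ih hne
      rcases ValuationRing.dvd_total a m with hd | hd
      · refine ⟨a, Finset.mem_insert_self _ _, fun b hb => ?_⟩
        rcases Finset.mem_insert.mp hb with rfl | hb
        · exact dvd_rfl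
        · exact hd.trans (hdvd b hb)
      · refine ⟨m, Finset.mem_insert_of_mem hm, fun b hb => ?_⟩
        rcases Finset.mem_insert.mp hb with rfl | hb
        · exact hd
        · exact hdvd b hb

lemma exists_snf_aux [IsDomain R] [ValuationRing R] :
    ∀ (n : ℕ) (M : Matrix (Fin n) (Fin n) R),
      ∃ A B : Matrix (Fin n) (Fin n) R, ∃ d : Fin n → R,
        IsUnit A.det ∧ IsUnit B.det ∧ A * M * B = diagonal d ∧
        (∀ i j, i ≤ j → d i ∣ d j) ∧ (∀ x : R, (∀ i j, x ∣ M i j) → ∀ i, x ∣ d i) := by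
  intro n
  induction n with
  | zero =>
    intro M
    refine ⟨1, 1, fun i => i.elim0, by simp, by simp, ?_, fun i => i.elim0,
      fun x _ i => i.elim0⟩
    ext i j
    exact i.elim0
  | succ m ih =>
    intro M
    classical
    obtain ⟨v, hv, hvd⟩ := exists_dvd_all
      (Finset.univ.image fun q : Fin (m+1) × Fin (m+1) => M q.1 q.2)
      (Finset.Nonempty.image Finset.univ_nonempty _)
    obtain ⟨⟨i₀, j₀⟩, -, rfl⟩ := Finset.mem_image.mp hv
    have hdvd : ∀ i j, M i₀ j₀ ∣ M i j := fun i j =>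
      hvd _ (Finset.mem_image.mpr ⟨(i, j), Finset.mem_univ _, rfl⟩)
    set σ := Equiv.swap (0 : Fin (m+1)) i₀ with hσdef
    set τ := Equiv.swap (0 : Fin (m+1)) j₀ with hτdef
    set M₁ := M.submatrix σ τ with hM₁def
    have hM₁ : ∀ i j, M i₀ j₀ ∣ M₁ i j := fun i j => hdvd _ _
    have hM₁00 : M₁ 0 0 = M i₀ j₀ := by
      simp [hM₁def, hσdef, hτdef, Equiv.swap_apply_left]
    set p := M i₀ j₀ with hpdef
    have hc' : ∀ i, ∃ y, M₁ i 0 = p * y := fun i => hM₁ i 0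
    have hb' : ∀ j, ∃ y, M₁ 0 j = p * y := fun j => hM₁ 0 j
    choose c hc using hc'
    choose b hb using hb'
    set E := clearL c with hEdef
    set F := clearR b with hFdef
    set M₂ := E * M₁ * F with hM₂def
    have hEM : ∀ i j, (E * M₁) i j = if i = 0 then M₁ 0 j else M₁ i j - c i * M₁ 0 j :=
      fun i j => clearL_mul c M₁ i j
    have h20 : M₂ 0 0 = p := by
      rw [hM₂def, mul_clearR, if_pos rfl, hEM, if_pos rfl, hM₁00]
    have h2r : ∀ i : Fin m, M₂ i.succ 0 = 0 := by
      intro i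
      rw [hM₂def, mul_clearR, if_pos rfl, hEM, if_neg (Fin.succ_ne_zero i), hc i.succ, hM₁00]
      ring
    have hEMr : ∀ i : Fin m, (E * M₁) i.succ 0 = 0 := by
      intro i
      rw [hEM, if_neg (Fin.succ_ne_zero i), hc i.succ, hM₁00]
      ring
    have h2c : ∀ j : Fin m, M₂ 0 j.succ = 0 := by
      intro j
      rw [hM₂def, mul_clearR, if_neg (Fin.succ_ne_zero j), hEM, if_pos rfl, hEM, if_pos rfl,
        hb j.succ, hM₁00]
      ring
    set M' : Matrix (Fin m) (Fin m) R := Matrix.of (fun i j => M₂ i.succ j.succ) with hM'def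
    have hembed : M₂ = embed p M' := by
      ext i j
      induction i using Fin.cases with
      | zero =>
        induction j using Fin.cases with
        | zero => rw [h20, embed_zero_zero]
        | succ j => rw [h2c j, embed_zero_succ]
      | succ i =>
        induction j using Fin.cases with
        | zero => rw [h2r i, embed_succ_zero]
        | succ j => rw [embed_succ_succ]; rfl
    have hxM₂ : ∀ x : R, (∀ i j, x ∣ M i j) → ∀ i j, x ∣ M₂ i j := by
      intro x hx i j
      rw [hM₂def]
      refine dvd_entries_mul_right x _ F (fun i j => ?_) i j
      exact dvd_entries_mul_left x E M₁ (fun i j => hx _ _) i j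
    have hpM₂ : ∀ i j, p ∣ M₂ i j := hxM₂ p hdvd
    obtain ⟨A', B', d', hA', hB', heq', hchain', hxd'⟩ := ih M'
    refine ⟨embed 1 A' * E * σ.permMatrix R, τ.permMatrix R * F * embed 1 B',
      Fin.cons p d', ?_, ?_, ?_, ?_, ?_⟩
    · rw [det_mul, det_mul, det_embed, hEdef, det_clearL]
      exact ((isUnit_one.mul hA').mul isUnit_one).mul (isUnit_det_permMatrix σ)
    · rw [det_mul, det_mul, hFdef, det_clearR, det_embed]
      exact ((isUnit_det_permMatrix τ).mul isUnit_one).mul (isUnit_one.mul hB')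
    · have hPMP : σ.permMatrix R * M * τ.permMatrix R = M₁ := by
        rw [PEquiv.toMatrix_toPEquiv_mul, PEquiv.mul_toMatrix_toPEquiv,
          Matrix.submatrix_submatrix]
        ext i j
        simp [hM₁def, hτdef, Equiv.symm_swap]
      have h1 : (embed 1 A' * E * σ.permMatrix R) * M * (τ.permMatrix R * F * embed 1 B')
          = embed 1 A' * (E * (σ.permMatrix R * M * τ.permMatrix R) * F) * embed 1 B' := by
        simp only [Matrix.mul_assoc]
      rw [h1, hPMP, ← hM₂def, hembed, embed_mul, embed_mul, one_mul, mul_one, heq',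
        embed_diagonal]
    · intro i j hij
      induction i using Fin.cases with
      | zero =>
        induction j using Fin.cases with
        | zero => exact dvd_rfl
        | succ j =>
          rw [Fin.cons_zero, Fin.cons_succ]
          exact hxd' p (fun i j => hpM₂ i.succ j.succ) j
      | succ i =>
        induction j using Fin.cases with
        | zero =>
          exact absurd (Fin.le_zero_iff.mp hij) (Fin.succ_ne_zero i)
        | succ j =>
          rw [Fin.cons_succ, Fin.cons_succ]
          exact hchain' i j (by rwa [Fin.succ_le_succ_iff] at hij)
    · intro x hx i
      induction i using Fin.cases with
      | zero => exact hx i₀ j₀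
      | succ i =>
        rw [Fin.cons_succ]
        exact hxd' x (fun i j => hxM₂ x hx i.succ j.succ) i

lemma exists_snf [IsDomain R] [IsDiscreteValuationRing R] (ϖ : R) (hϖ : Irreducible ϖ)
    {n : ℕ} (M : Matrix (Fin n) (Fin n) R) (hM : M.det ≠ 0) :
    ∃ A B : Matrix (Fin n) (Fin n) R, ∃ e : Fin n → ℕ,
      IsUnit A.det ∧ IsUnit B.det ∧ Monotone e ∧
      A * M * B = diagonal fun i => ϖ ^ e i := by
  classical
  obtain ⟨A, B, d, hA, hB, heq, hchain, -⟩ := exists_snf_aux n M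
  have hdne : ∀ i, d i ≠ 0 := by
    have h1 : (diagonal d).det ≠ 0 := by
      rw [← heq, det_mul, det_mul]
      exact mul_ne_zero (mul_ne_zero hA.ne_zero hM) hB.ne_zero
    rw [det_diagonal] at h1
    intro i hi
    exact h1 (Finset.prod_eq_zero (Finset.mem_univ i) hi)
  have hdu : ∀ i, ∃ (k : ℕ) (u : Rˣ), d i = u * ϖ ^ k := fun i =>
    IsDiscreteValuationRing.eq_unit_mul_pow_irreducible (hdne i) hϖ
  choose e u hu using hdu
  refine ⟨diagonal (fun i => (((u i)⁻¹ : Rˣ) : R)) * A, B, e, ?_, hB, ?_, ?_⟩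
  · rw [det_mul, det_diagonal]
    refine IsUnit.mul ?_ hA
    refine IsUnit.of_mul_eq_one (∏ i, (u i : R)) ?_
    rw [← Finset.prod_mul_distrib]
    exact Finset.prod_eq_one fun i _ => Units.inv_mul _
  · intro i j hij
    have h1 : d i ∣ d j := hchain i j hij
    rw [hu i, hu j] at h1
    have h2 : ϖ ^ e i ∣ ϖ ^ e j :=
      (dvd_mul_left (ϖ ^ e i) ((u i : R))).trans (h1.trans (Units.mul_left_dvd.mpr dvd_rfl))
    exact (pow_dvd_pow_iff hϖ.ne_zero hϖ.not_isUnit).mp h2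
  · have hdd : diagonal (fun i => (((u i)⁻¹ : Rˣ) : R)) * (A * M * B)
        = diagonal fun i => ϖ ^ e i := by
      rw [heq, diagonal_mul_diagonal]
      have hfun : (fun i => (((u i)⁻¹ : Rˣ) : R) * d i) = fun i => ϖ ^ e i := by
        funext i
        rw [hu i, ← mul_assoc, Units.inv_mul, one_mul]
      rw [hfun]
    calc diagonal (fun i => (((u i)⁻¹ : Rˣ) : R)) * A * M * B
        = diagonal (fun i => (((u i)⁻¹ : Rˣ) : R)) * (A * M * B) := by
          simp only [Matrix.mul_assoc]
      _ = _ := hdd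




-- assumed from previous parts:


lemma snf_le [IsDomain R] (ϖ : R) (hϖ : Irreducible ϖ)
    (A B : Matrix (Fin n) (Fin n) R) (e e' : Fin n → ℕ) (he : Monotone e)
    (h : A * diagonal (fun i => ϖ ^ e i) * B = diagonal (fun i => ϖ ^ e' i))
    (hk : k ≤ n) :
    ∑ i : Fin k, e (Fin.castLE hk i) ≤ ∑ i : Fin k, e' (Fin.castLE hk i) := by
  classical
  set S := ∑ i : Fin k, e (Fin.castLE hk i) with hS
  have hdvd : ∀ r c : Fin k → Fin n,
      ϖ ^ S ∣ (((A * diagonal (fun i => ϖ ^ e i)) * B).submatrix r c).det := by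
    intro r c
    refine dvd_det_submatrix_mul_right _ _ _ (fun r c => ?_) r c
    exact dvd_det_submatrix_mul_left _ _ _ (pow_dvd_det_submatrix_diagonal ϖ e he hk) r c
  have key := hdvd (Fin.castLE hk) (Fin.castLE hk)
  rw [h] at key
  rw [diagonal_submatrix_inj _ _ (Fin.castLE_injective hk), det_diagonal,
    Finset.prod_pow_eq_pow_sum] at key
  exact (pow_dvd_pow_iff hϖ.ne_zero hϖ.not_isUnit).mp key

lemma snf_unique [IsDomain R] (ϖ : R) (hϖ : Irreducible ϖ)
    (A B : Matrix (Fin n) (Fin n) R) (hA : IsUnit A.det) (hB : IsUnit B.det)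
    (e e' : Fin n → ℕ) (he : Monotone e) (he' : Monotone e')
    (h : A * diagonal (fun i => ϖ ^ e i) * B = diagonal (fun i => ϖ ^ e' i)) :
    e = e' := by
  classical
  have h' : A⁻¹ * diagonal (fun i => ϖ ^ e' i) * B⁻¹ = diagonal (fun i => ϖ ^ e i) := by
    have key : A⁻¹ * (A * diagonal (fun i => ϖ ^ e i) * B) * B⁻¹
        = diagonal (fun i => ϖ ^ e i) := by
      rw [Matrix.mul_assoc A, ← Matrix.mul_assoc A⁻¹ A, Matrix.nonsing_inv_mul A hA,
        Matrix.one_mul, Matrix.mul_assoc, Matrix.mul_nonsing_inv B hB, Matrix.mul_one]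
    rw [← key, h]
  have heq : ∀ k (hk : k ≤ n),
      ∑ i : Fin k, e (Fin.castLE hk i) = ∑ i : Fin k, e' (Fin.castLE hk i) := fun k hk =>
    le_antisymm (snf_le ϖ hϖ A B e e' he h hk) (snf_le ϖ hϖ A⁻¹ B⁻¹ e' e he' h' hk)
  funext i
  have h1 := heq i.val (le_of_lt i.isLt)
  have h2 := heq (i.val + 1) i.isLt
  rw [Fin.sum_univ_castSucc, Fin.sum_univ_castSucc] at h2
  have hlast : (Fin.castLE (i.isLt : i.val + 1 ≤ n) (Fin.last i.val)) = i := by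
    ext; simp
  have hc : ∀ f : Fin n → ℕ, ∑ j : Fin i.val, f (Fin.castLE i.isLt j.castSucc)
      = ∑ j : Fin i.val, f (Fin.castLE (le_of_lt i.isLt) j) := by
    intro f
    exact Finset.sum_congr rfl fun j _ => congrArg f (by ext; simp)
  rw [hc e, hc e', hlast] at h2
  omega










section Helpers

variable {S : Type*} [CommRing S]

lemma map_permMatrix (f : R →+* S) (σ : Equiv.Perm (Fin n)) :
    (σ.permMatrix R).map f = σ.permMatrix S := by
  ext i j
  simp [Equiv.Perm.permMatrix, PEquiv.toMatrix, Matrix.map_apply, apply_ite f]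

lemma permMatrix_mul_symm (σ : Equiv.Perm (Fin n)) :
    σ.permMatrix R * (σ⁻¹).permMatrix R = 1 := by
  show σ.toPEquiv.toMatrix * (σ⁻¹).toPEquiv.toMatrix = 1
  rw [← PEquiv.toMatrix_trans, ← Equiv.toPEquiv_trans]
  have h : σ.trans σ⁻¹ = Equiv.refl (Fin n) := Equiv.self_trans_symm σ
  rw [h, Equiv.toPEquiv_refl, PEquiv.toMatrix_refl]

lemma symm_mul_permMatrix (σ : Equiv.Perm (Fin n)) :
    (σ⁻¹).permMatrix R * σ.permMatrix R = 1 := by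
  have := permMatrix_mul_symm (R := R) σ⁻¹
  rwa [inv_inv] at this

lemma permMatrix_conj_diagonal (σ : Equiv.Perm (Fin n)) (w : Fin n → R) :
    σ.permMatrix R * diagonal w * (σ⁻¹).permMatrix R = diagonal (fun i => w (σ i)) := by
  rw [PEquiv.toMatrix_toPEquiv_mul, PEquiv.mul_toMatrix_toPEquiv, Matrix.submatrix_submatrix]
  have h2 : (diagonal w).submatrix (⇑σ ∘ id) (id ∘ ⇑(σ⁻¹ : Equiv.Perm (Fin n)).symm)
      = (diagonal w).submatrix σ σ := by
    have h3 : ((σ⁻¹ : Equiv.Perm (Fin n)).symm) = σ := Equiv.symm_symm σ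
    rw [h3]
    rfl
  rw [h2, diagonal_submatrix_inj w σ σ.injective]

/-- Build a `GL` element from a matrix with unit determinant. -/
noncomputable def toGL (A : Matrix (Fin n) (Fin n) R) (h : IsUnit A.det) : GL (Fin n) R :=
  ((Matrix.isUnit_iff_isUnit_det A).mpr h).unit

@[simp] lemma coe_toGL (A : Matrix (Fin n) (Fin n) R) (h : IsUnit A.det) :
    ((toGL A h : GL (Fin n) R) : Matrix (Fin n) (Fin n) R) = A :=
  IsUnit.unit_spec _

lemma coe_glmap (f : R →+* S) (k : GL (Fin n) R) :
    ((Matrix.GeneralLinearGroup.map (n := Fin n) f k : GL (Fin n) S) :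
      Matrix (Fin n) (Fin n) S) = (k : Matrix (Fin n) (Fin n) R).map f := rfl

end Helpers

section Clear

variable {K : Type*} [Field K] [Algebra R K] [IsDomain R] [IsDiscreteValuationRing R]
  [IsFractionRing R K]

lemma exists_pow_mul_integer (ϖ : R) (hϖ : Irreducible ϖ) (x : K) :
    ∃ (m : ℕ) (r : R), (algebraMap R K ϖ) ^ m * x = algebraMap R K r := by
  obtain ⟨s, r, hr⟩ := IsLocalization.exists_integer_multiple (nonZeroDivisors R) x
  have hs0 : (s : R) ≠ 0 := nonZeroDivisors.coe_ne_zero s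
  obtain ⟨m, u, hu⟩ := IsDiscreteValuationRing.eq_unit_mul_pow_irreducible hs0 hϖ
  refine ⟨m, (u⁻¹ : Rˣ) * r, ?_⟩
  have hϖm : (ϖ : R) ^ m = (u⁻¹ : Rˣ) * s := by
    rw [hu, ← mul_assoc, Units.inv_mul, one_mul]
  rw [_root_.map_mul, ← map_pow, hϖm, _root_.map_mul]
  rw [Algebra.smul_def] at hr
  rw [mul_assoc, hr]

lemma exists_matrix_clear (ϖ : R) (hϖ : Irreducible ϖ) (G : Matrix (Fin n) (Fin n) K) :
    ∃ (N : ℕ) (M₀ : Matrix (Fin n) (Fin n) R),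
      M₀.map (algebraMap R K) = (algebraMap R K ϖ) ^ N • G := by
  classical
  have h := fun (i j : Fin n) => exists_pow_mul_integer ϖ hϖ (G i j)
  choose m r hr using h
  set N := Finset.univ.sup (fun q : Fin n × Fin n => m q.1 q.2) with hN
  refine ⟨N, Matrix.of (fun i j => ϖ ^ (N - m i j) * r i j), ?_⟩
  ext i j
  have hle : m i j ≤ N := Finset.le_sup (f := fun q : Fin n × Fin n => m q.1 q.2)
    (Finset.mem_univ (i, j))
  rw [Matrix.map_apply, Matrix.smul_apply, Matrix.of_apply, _root_.map_mul, map_pow, smul_eq_mul,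
    ← hr i j, ← mul_assoc, ← pow_add]
  congr 2
  omega

end Clear





















section Main

variable {K : Type*} [Field K] [Algebra R K] [IsDomain R] [IsDiscreteValuationRing R]
  [IsFractionRing R K]

lemma matrix_map_inj (X Y : Matrix (Fin n) (Fin n) R)
    (h : X.map (algebraMap R K) = Y.map (algebraMap R K)) : X = Y := by
  ext i j
  exact IsFractionRing.injective R K (congrFun (congrFun h i) j)

lemma sandwich (u v : GL (Fin n) R) (X Y : Matrix (Fin n) (Fin n) K)
    (h : ((u : Matrix (Fin n) (Fin n) R)).map (algebraMap R K) * X *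
      ((v : Matrix (Fin n) (Fin n) R)).map (algebraMap R K) = Y) :
    (((u⁻¹ : GL (Fin n) R) : Matrix (Fin n) (Fin n) R)).map (algebraMap R K) * Y *
      (((v⁻¹ : GL (Fin n) R) : Matrix (Fin n) (Fin n) R)).map (algebraMap R K) = X := by
  have hu : (((u⁻¹ : GL (Fin n) R) : Matrix (Fin n) (Fin n) R)).map (algebraMap R K) *
      ((u : Matrix (Fin n) (Fin n) R)).map (algebraMap R K) = 1 := by
    rw [← Matrix.map_mul]
    have : ((u⁻¹ : GL (Fin n) R) : Matrix (Fin n) (Fin n) R) * (u : Matrix (Fin n) (Fin n) R)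
        = 1 := by
      rw [← Units.val_mul, inv_mul_cancel, Units.val_one]
    rw [this, Matrix.map_one _ (map_zero _) (map_one _)]
  have hv : ((v : Matrix (Fin n) (Fin n) R)).map (algebraMap R K) *
      (((v⁻¹ : GL (Fin n) R) : Matrix (Fin n) (Fin n) R)).map (algebraMap R K) = 1 := by
    rw [← Matrix.map_mul]
    have : (v : Matrix (Fin n) (Fin n) R) * ((v⁻¹ : GL (Fin n) R) : Matrix (Fin n) (Fin n) R)
        = 1 := by
      rw [← Units.val_mul, mul_inv_cancel, Units.val_one]
    rw [this, Matrix.map_one _ (map_zero _) (map_one _)]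
  calc (((u⁻¹ : GL (Fin n) R) : Matrix (Fin n) (Fin n) R)).map (algebraMap R K) * Y *
        (((v⁻¹ : GL (Fin n) R) : Matrix (Fin n) (Fin n) R)).map (algebraMap R K)
      = (((u⁻¹ : GL (Fin n) R) : Matrix (Fin n) (Fin n) R)).map (algebraMap R K) *
        (((u : Matrix (Fin n) (Fin n) R)).map (algebraMap R K) * X *
          ((v : Matrix (Fin n) (Fin n) R)).map (algebraMap R K)) *
        (((v⁻¹ : GL (Fin n) R) : Matrix (Fin n) (Fin n) R)).map (algebraMap R K) := by rw [h]
    _ = ((((u⁻¹ : GL (Fin n) R) : Matrix (Fin n) (Fin n) R)).map (algebraMap R K) *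
          ((u : Matrix (Fin n) (Fin n) R)).map (algebraMap R K)) * X *
        (((v : Matrix (Fin n) (Fin n) R)).map (algebraMap R K) *
          (((v⁻¹ : GL (Fin n) R) : Matrix (Fin n) (Fin n) R)).map (algebraMap R K)) := by
        simp only [Matrix.mul_assoc]
    _ = X := by rw [hu, hv, Matrix.one_mul, Matrix.mul_one]

lemma smul_cartanDiag (ϖ : R) (hϖ : Irreducible ϖ) (f : Fin n → ℤ) (N : ℕ)
    (hN : ∀ i, 0 ≤ f i + N) :
    (algebraMap R K ϖ) ^ N • cartanDiag ϖ f
      = (diagonal fun i => ϖ ^ (f i + N).toNat).map (algebraMap R K) := by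
  have hπ0 : algebraMap R K ϖ ≠ 0 := fun h =>
    hϖ.ne_zero (IsFractionRing.injective R K (by rw [h, map_zero]))
  ext i j
  rw [Matrix.smul_apply, Matrix.map_apply, cartanDiag]
  by_cases h : i = j
  · subst h
    rw [diagonal_apply_eq, diagonal_apply_eq, smul_eq_mul, map_pow]
    rw [show ((algebraMap R K ϖ) ^ N : K) = (algebraMap R K ϖ) ^ (N : ℤ) from (zpow_natCast _ _).symm,
      show ((algebraMap R K ϖ) ^ ((f i + N).toNat) : K)
        = (algebraMap R K ϖ) ^ (((f i + N).toNat : ℕ) : ℤ) from (zpow_natCast _ _).symm,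
      ← zpow_add₀ hπ0, Int.toNat_of_nonneg (hN i)]
    ring_nf
  · rw [diagonal_apply_ne _ h, diagonal_apply_ne _ h, smul_eq_mul, mul_zero, map_zero]

lemma cartan_unique (ϖ : R) (hϖ : Irreducible ϖ)
    (f f' : Fin n → ℤ) (hf : Antitone f) (hf' : Antitone f')
    (k₁ k₂ l₁ l₂ : GL (Fin n) R)
    (h : ((Matrix.GeneralLinearGroup.map (n := Fin n) (algebraMap R K)) k₁ :
          Matrix (Fin n) (Fin n) K) * cartanDiag ϖ f *
        ((Matrix.GeneralLinearGroup.map (n := Fin n) (algebraMap R K)) k₂ :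
          Matrix (Fin n) (Fin n) K)
      = ((Matrix.GeneralLinearGroup.map (n := Fin n) (algebraMap R K)) l₁ :
          Matrix (Fin n) (Fin n) K) * cartanDiag ϖ f' *
        ((Matrix.GeneralLinearGroup.map (n := Fin n) (algebraMap R K)) l₂ :
          Matrix (Fin n) (Fin n) K)) :
    f = f' := by
  classical
  simp only [coe_glmap] at h
  -- Step 1: merge the units
  set a : GL (Fin n) R := l₁⁻¹ * k₁ with hadef
  set b : GL (Fin n) R := k₂ * l₂⁻¹ with hbdef
  have h2 : ((a : Matrix (Fin n) (Fin n) R)).map (algebraMap R K) * cartanDiag ϖ f *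
      ((b : Matrix (Fin n) (Fin n) R)).map (algebraMap R K) = cartanDiag ϖ f' := by
    have hs := sandwich l₁ l₂ (cartanDiag ϖ f') _ h.symm
    rw [← hs]
    have ha : ((a : Matrix (Fin n) (Fin n) R)).map (algebraMap R K)
        = (((l₁⁻¹ : GL (Fin n) R) : Matrix (Fin n) (Fin n) R)).map (algebraMap R K) *
          ((k₁ : Matrix (Fin n) (Fin n) R)).map (algebraMap R K) := by
      rw [hadef, Units.val_mul, Matrix.map_mul]
    have hb : ((b : Matrix (Fin n) (Fin n) R)).map (algebraMap R K)
        = ((k₂ : Matrix (Fin n) (Fin n) R)).map (algebraMap R K) *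
          (((l₂⁻¹ : GL (Fin n) R) : Matrix (Fin n) (Fin n) R)).map (algebraMap R K) := by
      rw [hbdef, Units.val_mul, Matrix.map_mul]
    rw [ha, hb]
    simp only [Matrix.mul_assoc]
  -- Step 2: clear denominators
  set N := Finset.univ.sup (fun i : Fin n => ((-f i).toNat ⊔ (-f' i).toNat)) with hNdef
  have hNf : ∀ i, 0 ≤ f i + N := by
    intro i
    have := Finset.le_sup (f := fun i : Fin n => ((-f i).toNat ⊔ (-f' i).toNat))
      (Finset.mem_univ i)
    rw [← hNdef] at this
    have h1 : (-f i).toNat ≤ N := le_trans (le_max_left _ _) this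
    omega
  have hNf' : ∀ i, 0 ≤ f' i + N := by
    intro i
    have := Finset.le_sup (f := fun i : Fin n => ((-f i).toNat ⊔ (-f' i).toNat))
      (Finset.mem_univ i)
    rw [← hNdef] at this
    have h1 : (-f' i).toNat ≤ N := le_trans (le_max_right _ _) this
    omega
  set w : Fin n → ℕ := fun i => (f i + N).toNat with hwdef
  set w' : Fin n → ℕ := fun i => (f' i + N).toNat with hw'def
  have h3 : ((a : Matrix (Fin n) (Fin n) R)).map (algebraMap R K) *
      ((diagonal fun i => ϖ ^ w i).map (algebraMap R K)) *
      ((b : Matrix (Fin n) (Fin n) R)).map (algebraMap R K)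
      = (diagonal fun i => ϖ ^ w' i).map (algebraMap R K) := by
    rw [← smul_cartanDiag ϖ hϖ f N hNf, ← smul_cartanDiag ϖ hϖ f' N hNf']
    rw [Matrix.mul_smul, Matrix.smul_mul, h2]
  have h4 : (a : Matrix (Fin n) (Fin n) R) * diagonal (fun i => ϖ ^ w i) *
      (b : Matrix (Fin n) (Fin n) R) = diagonal fun i => ϖ ^ w' i := by
    apply matrix_map_inj (K := K)
    rw [Matrix.map_mul, Matrix.map_mul]
    exact h3
  -- Step 3: conjugate by the reversal permutation
  set ρ : Equiv.Perm (Fin n) := Fin.revPerm with hρdef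
  set P : Matrix (Fin n) (Fin n) R := ρ.permMatrix R with hPdef
  set Ps : Matrix (Fin n) (Fin n) R := (ρ⁻¹).permMatrix R with hPsdef
  have hcancel : ∀ X : Matrix (Fin n) (Fin n) R, Ps * (P * X) = X := fun X => by
    rw [← Matrix.mul_assoc, hPsdef, hPdef, symm_mul_permMatrix, Matrix.one_mul]
  have hdw : P * diagonal (fun i => ϖ ^ w i) * Ps = diagonal (fun i => ϖ ^ w (ρ i)) :=
    permMatrix_conj_diagonal ρ _
  have hdw' : P * diagonal (fun i => ϖ ^ w' i) * Ps = diagonal (fun i => ϖ ^ w' (ρ i)) :=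
    permMatrix_conj_diagonal ρ _
  have hmid : (a : Matrix (Fin n) (Fin n) R) *
      (diagonal (fun i => ϖ ^ w i) * ((b : Matrix (Fin n) (Fin n) R) * Ps))
      = diagonal (fun i => ϖ ^ w' i) * Ps := by
    calc (a : Matrix (Fin n) (Fin n) R) *
        (diagonal (fun i => ϖ ^ w i) * ((b : Matrix (Fin n) (Fin n) R) * Ps))
        = ((a : Matrix (Fin n) (Fin n) R) * diagonal (fun i => ϖ ^ w i) *
            (b : Matrix (Fin n) (Fin n) R)) * Ps := by simp only [Matrix.mul_assoc]
      _ = _ := by rw [h4]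
  have hconj : (P * (a : Matrix (Fin n) (Fin n) R) * Ps) *
      diagonal (fun i => ϖ ^ w (ρ i)) * (P * (b : Matrix (Fin n) (Fin n) R) * Ps)
      = diagonal (fun i => ϖ ^ w' (ρ i)) := by
    rw [← hdw, ← hdw']
    simp only [Matrix.mul_assoc]
    rw [hcancel, hcancel, hmid]
  -- Step 4: uniqueness over R
  have hdetP : IsUnit P.det := isUnit_det_permMatrix ρ
  have hdetPs : IsUnit Ps.det := isUnit_det_permMatrix ρ⁻¹
  have hdeta : IsUnit ((a : Matrix (Fin n) (Fin n) R)).det :=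
    (Matrix.isUnit_iff_isUnit_det _).mp a.isUnit
  have hdetb : IsUnit ((b : Matrix (Fin n) (Fin n) R)).det :=
    (Matrix.isUnit_iff_isUnit_det _).mp b.isUnit
  have hE : Monotone fun i => w (ρ i) := by
    intro i j hij
    have hrev : Fin.rev j ≤ Fin.rev i := Fin.rev_le_rev.mpr hij
    have hle : f (Fin.rev i) ≤ f (Fin.rev j) := hf hrev
    simp only [hwdef, hρdef, Fin.revPerm_apply]
    omega
  have hE' : Monotone fun i => w' (ρ i) := by
    intro i j hij
    have hrev : Fin.rev j ≤ Fin.rev i := Fin.rev_le_rev.mpr hij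
    have hle : f' (Fin.rev i) ≤ f' (Fin.rev j) := hf' hrev
    simp only [hw'def, hρdef, Fin.revPerm_apply]
    omega
  have hdA : IsUnit ((P * (a : Matrix (Fin n) (Fin n) R) * Ps).det) := by
    rw [det_mul, det_mul]
    exact (hdetP.mul hdeta).mul hdetPs
  have hdB : IsUnit ((P * (b : Matrix (Fin n) (Fin n) R) * Ps).det) := by
    rw [det_mul, det_mul]
    exact (hdetP.mul hdetb).mul hdetPs
  have hEE' := snf_unique ϖ hϖ _ _ hdA hdB
    (fun i => w (ρ i)) (fun i => w' (ρ i)) hE hE' hconj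
  -- Step 5: recover `f = f'`
  have hww' : w = w' := by
    funext i
    have := congrFun hEE' (Fin.rev i)
    simpa [hρdef, Fin.rev_rev] using this
  funext i
  have h5 : (f i + N).toNat = (f' i + N).toNat := congrFun hww' i
  have h6 := hNf i
  have h7 := hNf' i
  omega


theorem cartan_decomposition' (ϖ : R) (hϖ : Irreducible ϖ) (g : GL (Fin n) K) :
    ∃! f : {f : Fin n → ℤ // Antitone f},
      ∃ k₁ k₂ : GL (Fin n) R,
        (g : Matrix (Fin n) (Fin n) K) =
          (((Matrix.GeneralLinearGroup.map (n := Fin n) (algebraMap R K)) k₁ :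
              Matrix (Fin n) (Fin n) K)) * cartanDiag ϖ f.val *
            ((Matrix.GeneralLinearGroup.map (n := Fin n) (algebraMap R K)) k₂ :
              Matrix (Fin n) (Fin n) K) := by
  classical
  have hπ0 : algebraMap R K ϖ ≠ 0 := fun h =>
    hϖ.ne_zero (IsFractionRing.injective R K (by rw [h, map_zero]))
  obtain ⟨N, M₀, hM₀⟩ := exists_matrix_clear ϖ hϖ (g : Matrix (Fin n) (Fin n) K)
  have hdetg : ((g : Matrix (Fin n) (Fin n) K)).det ≠ 0 :=
    ((Matrix.isUnit_iff_isUnit_det _).mp g.isUnit).ne_zero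
  have hdetM₀ : M₀.det ≠ 0 := by
    intro h0
    have h1 : (M₀.map (algebraMap R K)).det = 0 := by
      rw [← RingHom.mapMatrix_apply, ← RingHom.map_det, h0, map_zero]
    rw [hM₀, Matrix.det_smul] at h1
    exact (mul_ne_zero (pow_ne_zero _ (pow_ne_zero _ hπ0)) hdetg) h1
  obtain ⟨A, B, e, hA, hB, he, heq⟩ := exists_snf ϖ hϖ M₀ hdetM₀
  have heqK : (A.map (algebraMap R K)) * (M₀.map (algebraMap R K)) * (B.map (algebraMap R K))
      = (diagonal fun i => ϖ ^ e i).map (algebraMap R K) := by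
    rw [← Matrix.map_mul, ← Matrix.map_mul, heq]
  set f : Fin n → ℤ := fun i => (e (Fin.rev i) : ℤ) - N with hfdef
  have hf : Antitone f := by
    intro i j hij
    have h1 : e (Fin.rev j) ≤ e (Fin.rev i) := he (Fin.rev_le_rev.mpr hij)
    simp only [hfdef]
    omega
  set w : Fin n → K := fun i => (algebraMap R K ϖ) ^ ((e i : ℤ) - N) with hwdef
  have h1 : (algebraMap R K ϖ) ^ N • ((A.map (algebraMap R K)) *
      (g : Matrix (Fin n) (Fin n) K) * (B.map (algebraMap R K)))
      = (diagonal fun i => ϖ ^ e i).map (algebraMap R K) := by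
    rw [← heqK, hM₀, Matrix.mul_smul, Matrix.smul_mul]
  have h2 : (algebraMap R K ϖ) ^ N • diagonal w
      = (diagonal fun i => ϖ ^ e i).map (algebraMap R K) := by
    ext i j
    rw [Matrix.smul_apply, Matrix.map_apply]
    by_cases h : i = j
    · subst h
      rw [diagonal_apply_eq, diagonal_apply_eq, smul_eq_mul, map_pow, hwdef]
      rw [show ((algebraMap R K ϖ) ^ N : K) = (algebraMap R K ϖ) ^ (N : ℤ) from
          (zpow_natCast _ _).symm,
        show ((algebraMap R K ϖ) ^ (e i) : K) = (algebraMap R K ϖ) ^ ((e i : ℕ) : ℤ) from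
          (zpow_natCast _ _).symm,
        ← zpow_add₀ hπ0]
      congr 1
      ring
    · rw [diagonal_apply_ne _ h, diagonal_apply_ne _ h, smul_eq_mul, mul_zero, map_zero]
  have hKdiag : (A.map (algebraMap R K)) * (g : Matrix (Fin n) (Fin n) K) *
      (B.map (algebraMap R K)) = diagonal w := by
    have h3 := h1.trans h2.symm
    have h4 := congrArg (fun X : Matrix (Fin n) (Fin n) K =>
      ((algebraMap R K ϖ) ^ N)⁻¹ • X) h3
    simpa [inv_smul_smul₀ (pow_ne_zero N hπ0)] using h4
  set ρ : Equiv.Perm (Fin n) := Fin.revPerm with hρdef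
  have hcd : cartanDiag ϖ f = diagonal (fun i => w (ρ i)) := by
    unfold cartanDiag
    congr 1
  have hconj : (ρ⁻¹).permMatrix K * cartanDiag ϖ f * ρ.permMatrix K = diagonal w := by
    rw [hcd]
    have h5 := permMatrix_conj_diagonal (R := K) ρ⁻¹ (fun i => w (ρ i))
    rw [inv_inv] at h5
    simp only [Equiv.Perm.inv_def, Equiv.apply_symm_apply] at h5 ⊢
    rw [h5]
  set k₁ : GL (Fin n) R :=
    (toGL A hA)⁻¹ * toGL ((ρ⁻¹).permMatrix R) (isUnit_det_permMatrix _) with hk₁def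
  set k₂ : GL (Fin n) R :=
    toGL (ρ.permMatrix R) (isUnit_det_permMatrix _) * (toGL B hB)⁻¹ with hk₂def
  have hswc : (((toGL A hA)⁻¹ : GL (Fin n) R) : Matrix (Fin n) (Fin n) R).map (algebraMap R K) *
      diagonal w *
      (((toGL B hB)⁻¹ : GL (Fin n) R) : Matrix (Fin n) (Fin n) R).map (algebraMap R K)
      = (g : Matrix (Fin n) (Fin n) K) := by
    refine sandwich (toGL A hA) (toGL B hB) _ _ ?_
    rw [coe_toGL, coe_toGL]
    exact hKdiag
  have hmain : (g : Matrix (Fin n) (Fin n) K) =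
      (((Matrix.GeneralLinearGroup.map (n := Fin n) (algebraMap R K)) k₁ :
          Matrix (Fin n) (Fin n) K)) * cartanDiag ϖ f *
        ((Matrix.GeneralLinearGroup.map (n := Fin n) (algebraMap R K)) k₂ :
          Matrix (Fin n) (Fin n) K) := by
    rw [coe_glmap, coe_glmap, hk₁def, hk₂def, Units.val_mul, Units.val_mul,
      Matrix.map_mul, Matrix.map_mul, coe_toGL, coe_toGL, map_permMatrix, map_permMatrix]
    rw [← hswc, ← hconj]
    simp only [Matrix.mul_assoc]
  refine ⟨⟨f, hf⟩, ⟨k₁, k₂, hmain⟩, ?_⟩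
  rintro ⟨f', hf'⟩ ⟨l₁, l₂, hl⟩
  apply Subtype.ext
  exact cartan_unique ϖ hϖ f' f hf' hf l₁ l₂ k₁ k₂ (hl.symm.trans hmain)


end Main

end CartanAux

/-- **Cartan decomposition.** Let `R` be a discrete valuation ring with uniformiser
`ϖ` and fraction field `K`. Then `GLₙ(K)` is the disjoint union over antitone `f : Fin n → ℤ`
of the double cosets `GLₙ(R) ⬝ diag (ϖ ^ f) ⬝ GLₙ(R)`: every `g ∈ GLₙ(K)` lies in exactly one
such double coset. -/
theorem cartan_decomposition {R : Type*} [CommRing R] [IsDomain R]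
    [IsDiscreteValuationRing R] {K : Type*} [Field K] [Algebra R K] [IsFractionRing R K]
    (ϖ : R) (hϖ : Irreducible ϖ) {n : ℕ} (g : GL (Fin n) K) :
    ∃! f : {f : Fin n → ℤ // Antitone f},
      ∃ k₁ k₂ : GL (Fin n) R,
        (g : Matrix (Fin n) (Fin n) K) =
          (((Matrix.GeneralLinearGroup.map (n := Fin n) (algebraMap R K)) k₁ :
              Matrix (Fin n) (Fin n) K)) * cartanDiag ϖ f.val *
            ((Matrix.GeneralLinearGroup.map (n := Fin n) (algebraMap R K)) k₂ :
              Matrix (Fin n) (Fin n) K) := by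
  exact CartanAux.cartan_decomposition' ϖ hϖ g
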